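/- Let (Ω, 𝒜, μ) be a σ-finite measure space, let I be a nonempty finite index set, let f_i (i ∈ I) be μ-a.e. strictly positive probability densities with respect to μ, and let ω_i > 0 be scalars with ∑_{i∈I} ω_i = 1. Assume c := ∫ ∏_{i∈I} f_i(x)^{ω_i} dμ(x) satisfies 0 < c < ∞, and define f̄(x) := (1/c) ∏_{i∈I} f_i(x)^{ω_i}. Then for every μ-a.e. strictly positive probability density f with respect to μ for which each divergence D_KL(f‖f_i) (i ∈ I) and D_KL(f‖f̄) is well defined, one has the identity ∑_{i∈I} ω_i D_KL(f‖f_i) = D_KL(f‖f̄) − log c. -/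

import Mathlib

open MeasureTheory

/-- the weighted Kullback-Leibler cost decomposes as
`∑ ωᵢ D(f‖fᵢ) = D(f‖f̄) − log c` where `f̄ = (1/c) ∏ fᵢ^ωᵢ`. -/
theorem weighted_KL_cost_identity
    {Ω : Type*} [MeasurableSpace Ω] (μ : Measure Ω) [SigmaFinite μ]
    {I : Type*} [Fintype I] [Nonempty I]
    (f : I → Ω → ℝ)
    (hmeas : ∀ i, Measurable (f i))
    (hnn : ∀ i x, 0 ≤ f i x)
    (hpos : ∀ i, ∀ᵐ x ∂μ, 0 < f i x)
    (hone : ∀ i, ∫ x, f i x ∂μ = 1)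
    (ω : I → ℝ) (hω : ∀ i, 0 < ω i) (hωs : ∑ i, ω i = 1)
    (c : ℝ) (hc : c = ∫ x, ∏ i, f i x ^ ω i ∂μ)
    (hcpos : 0 < c)
    (hcfin : Integrable (fun x => ∏ i, f i x ^ ω i) μ)
    (fbar : Ω → ℝ) (hfbar : ∀ x, fbar x = (∏ i, f i x ^ ω i) / c) :
    ∀ g : Ω → ℝ, Measurable g → (∀ x, 0 ≤ g x) → (∀ᵐ x ∂μ, 0 < g x) →
      (∫ x, g x ∂μ) = 1 →
      (∀ i, Integrable (fun x => g x * Real.log (g x / f i x)) μ) →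
      Integrable (fun x => g x * Real.log (g x / fbar x)) μ →
      ∑ i, ω i * ∫ x, g x * Real.log (g x / f i x) ∂μ
        = (∫ x, g x * Real.log (g x / fbar x) ∂μ) - Real.log c := by

  intro g hgm hgnn hgpos hgint hKL hKLbar
  have hgI : Integrable g μ := by
    by_contra h
    rw [integral_undef h] at hgint
    norm_num at hgint
  have hae : ∀ᵐ x ∂μ, ∑ i, ω i * (g x * Real.log (g x / f i x))
      = g x * Real.log (g x / fbar x) - g x * Real.log c := by
    filter_upwards [ae_all_iff.2 hpos, hgpos] with x hf hg
    have hprod : 0 < ∏ i, f i x ^ ω i :=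
      Finset.prod_pos fun i _ => Real.rpow_pos_of_pos (hf i) _
    have hfbarpos : 0 < fbar x := by rw [hfbar]; exact div_pos hprod hcpos
    have hlog : ∀ i, Real.log (g x / f i x) = Real.log (g x) - Real.log (f i x) :=
      fun i => Real.log_div hg.ne' (hf i).ne'
    have hlogbar : Real.log (g x / fbar x)
        = Real.log (g x) - (∑ i, ω i * Real.log (f i x)) + Real.log c := by
      rw [Real.log_div hg.ne' hfbarpos.ne', hfbar, Real.log_div hprod.ne' hcpos.ne',
        Real.log_prod (fun i _ => (Real.rpow_pos_of_pos (hf i) _).ne')]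
      simp_rw [Real.log_rpow (hf _)]
      ring
    calc ∑ i, ω i * (g x * Real.log (g x / f i x))
        = ∑ i, (ω i * (g x * Real.log (g x)) - g x * (ω i * Real.log (f i x))) := by
          refine Finset.sum_congr rfl fun i _ => ?_
          rw [hlog i]; ring
      _ = (∑ i, ω i) * (g x * Real.log (g x)) - g x * ∑ i, ω i * Real.log (f i x) := by
          rw [Finset.sum_sub_distrib, ← Finset.sum_mul, ← Finset.mul_sum]
      _ = g x * Real.log (g x / fbar x) - g x * Real.log c := by
          rw [hωs, hlogbar]; ring
  have hint_i : ∀ i, Integrable (fun x => ω i * (g x * Real.log (g x / f i x))) μ :=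
    fun i => (hKL i).const_mul _
  have h1 : ∑ i, ω i * ∫ x, g x * Real.log (g x / f i x) ∂μ
      = ∫ x, ∑ i, ω i * (g x * Real.log (g x / f i x)) ∂μ := by
    rw [integral_finset_sum _ fun i _ => hint_i i]
    simp_rw [integral_const_mul]
  rw [h1, integral_congr_ae hae, integral_sub hKLbar (hgI.mul_const _)]
  have h2 : ∫ x, g x * Real.log c ∂μ = Real.log c := by
    rw [integral_mul_const, hgint, one_mul]
  rw [h2]
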